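/- Let N be a finitely generated module over a complete DVR W and let {N_n} be a decreasing family of submodules of N such that each N/N_n has finite length and ⋂_n N_n = 0. Then the topology on N defined by the family {N_n} coincides with the p-adic (maximal-ideal-adic) topology; in particular N is complete and closed in any ambient module for this topology. -/

import Mathlib

open Submodule IsLocalRing

universe u v w

section Aux

variable (W : Type u) [CommRing W] [IsLocalRing W]

private lemma aux_artinian_base (M : Type v) [AddCommGroup M] [Module W M] [Module.Finite W M]
    (h : maximalIdeal W • (⊤ : Submodule W M) = ⊥) : IsArtinian W M := by
  have htor : Module.IsTorsionBySet W M (maximalIdeal W : Set W) := by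
    intro x a
    have : (a : W) • x ∈ maximalIdeal W • (⊤ : Submodule W M) :=
      Submodule.smul_mem_smul a.2 Submodule.mem_top
    rw [h] at this
    simpa using this
  letI := htor.module
  letI : Field (W ⧸ maximalIdeal W) := Ideal.Quotient.field _
  haveI : IsScalarTower W (W ⧸ maximalIdeal W) M := htor.isScalarTower
  haveI : Module.Finite (W ⧸ maximalIdeal W) M :=
    Module.Finite.of_restrictScalars_finite W _ _
  have hart : IsArtinian (W ⧸ maximalIdeal W) M := inferInstance
  let f : Submodule W M → Submodule (W ⧸ maximalIdeal W) M := fun p =>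
    { carrier := p
      add_mem' := fun ha hb => p.add_mem ha hb
      zero_mem' := p.zero_mem
      smul_mem' := by
        intro c x hx
        obtain ⟨a, rfl⟩ := Ideal.Quotient.mk_surjective c
        have hsm : (Ideal.Quotient.mk (maximalIdeal W) a) • x = a • x := htor.mk_smul a x
        rw [hsm]
        exact p.smul_mem a hx }
  have hmono : ∀ p q : Submodule W M, p < q → f p < f q := by
    intro p q hpq
    refine lt_of_le_of_ne (fun x hx => hpq.le hx) (fun h => hpq.ne ?_)
    ext x
    exact SetLike.ext_iff.mp h x
  rw [isArtinian_iff]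
  exact Subrelation.wf (fun {p q} h => hmono p q h)
    (InvImage.wf f ((isArtinian_iff _ _).mp hart))

private lemma aux_artinian [IsNoetherianRing W] :
    ∀ (n : ℕ) (M : Type v) [AddCommGroup M] [Module W M] [Module.Finite W M],
      (maximalIdeal W ^ n) • (⊤ : Submodule W M) = ⊥ → IsArtinian W M := by
  intro n
  induction n with
  | zero =>
    intro M _ _ _ h
    rw [pow_zero, Ideal.one_eq_top, top_smul] at h
    have : Subsingleton M := by
      refine ⟨fun a b => ?_⟩
      have ha : a ∈ (⊥ : Submodule W M) := h ▸ mem_top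
      have hb : b ∈ (⊥ : Submodule W M) := h ▸ mem_top
      rw [Submodule.mem_bot] at ha hb
      rw [ha, hb]
    infer_instance
  | succ n ih =>
    intro M _ _ _ h
    set K : Submodule W M := maximalIdeal W • ⊤ with hK
    haveI : Module.Finite W K := Module.Finite.iff_fg.mpr (IsNoetherian.noetherian K)
    have hKbot : (maximalIdeal W ^ n) • K = ⊥ := by
      rw [hK, ← Submodule.smul_assoc, Ideal.smul_eq_mul, ← pow_succ, h]
    have hKb : (maximalIdeal W ^ n) • (⊤ : Submodule W K) = ⊥ := by
      rw [eq_bot_iff]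
      intro x hx
      have hmap : Submodule.map K.subtype ((maximalIdeal W ^ n) • (⊤ : Submodule W K))
          = (maximalIdeal W ^ n) • K := by
        rw [Submodule.map_smul'', Submodule.map_top, Submodule.range_subtype]
      have hxm : (x : M) ∈ (maximalIdeal W ^ n) • K := hmap ▸ Submodule.mem_map_of_mem hx
      rw [hKbot, Submodule.mem_bot] at hxm
      rw [Submodule.mem_bot]
      exact Subtype.ext (by simpa using hxm)
    haveI hArtK : IsArtinian W K := ih K hKb
    haveI : IsArtinian W (M ⧸ K) := by
      apply aux_artinian_base
      have hmap : Submodule.map K.mkQ (maximalIdeal W • ⊤ : Submodule W M)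
          = maximalIdeal W • (⊤ : Submodule W (M ⧸ K)) := by
        rw [Submodule.map_smul'', Submodule.map_top, Submodule.range_mkQ]
      rw [← hmap, ← hK, eq_bot_iff]
      rintro y ⟨m, hm, rfl⟩
      simpa [Submodule.mem_bot, Submodule.Quotient.mk_eq_zero] using hm
    exact isArtinian_of_range_eq_ker K.subtype K.mkQ
      (by rw [Submodule.range_subtype, Submodule.ker_mkQ])

private lemma aux_len (M : Type v) [AddCommGroup M] [Module W M]
    (h : IsFiniteLength W M) :
    ∃ k, (maximalIdeal W ^ k) • (⊤ : Submodule W M) = ⊥ := by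
  obtain ⟨hN, hA⟩ := isFiniteLength_iff_isNoetherian_isArtinian.mp h
  have mono : ∀ a b : ℕ, a ≤ b →
      (maximalIdeal W ^ b) • (⊤ : Submodule W M) ≤ (maximalIdeal W ^ a) • ⊤ :=
    fun a b hab => Submodule.smul_mono (Ideal.pow_le_pow_right hab) le_rfl
  obtain ⟨k, hk⟩ := IsArtinian.monotone_stabilizes (R := W) (M := M)
    ⟨fun k => OrderDual.toDual ((maximalIdeal W ^ k) • ⊤), fun a b hab => mono a b hab⟩
  refine ⟨k, ?_⟩
  have hstab : (maximalIdeal W ^ k) • (⊤ : Submodule W M) = (maximalIdeal W ^ (k + 1)) • ⊤ :=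
    hk (k + 1) (Nat.le_succ k)
  apply Submodule.eq_bot_of_le_smul_of_le_jacobson_bot (maximalIdeal W)
  · exact IsNoetherian.noetherian _
  · rw [← Submodule.smul_assoc, Ideal.smul_eq_mul, ← pow_succ']
    rw [hstab]
  · exact maximalIdeal_le_jacobson ⊥

end Aux

section Precomplete

private lemma mem_smul_top_pi {R : Type u} [CommRing R] (J : Ideal R) {k : ℕ}
    (x : Fin k → R) : x ∈ J • (⊤ : Submodule R (Fin k → R)) ↔ ∀ j, x j ∈ J := by
  constructor
  · intro hx j
    refine Submodule.smul_induction_on hx (fun a ha m _ => ?_) (fun y z hy hz => ?_)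
    · simpa using J.mul_mem_right (m j) ha
    · exact J.add_mem hy hz
  · intro hx
    have hxsum : x = ∑ j, Pi.single j (x j) := (Finset.univ_sum_single x).symm
    rw [hxsum]
    refine Submodule.sum_mem _ fun j _ => ?_
    have hsingle : (Pi.single j (x j) : Fin k → R) = (x j) • (Pi.single j (1 : R) : Fin k → R) := by
      ext t
      by_cases ht : t = j
      · subst ht; simp
      · simp [Pi.single_apply, ht]
    rw [hsingle]
    exact Submodule.smul_mem_smul (hx j) mem_top

private lemma mem_smul_top_self {R : Type u} [CommRing R] (J : Ideal R) (x : R) :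
    x ∈ J • (⊤ : Submodule R R) ↔ x ∈ J := by
  rw [Ideal.smul_eq_mul, Ideal.mul_top]

private lemma isPrecomplete_pi {R : Type u} [CommRing R] (I : Ideal R) [IsPrecomplete I R]
    (k : ℕ) : IsPrecomplete I (Fin k → R) := by
  constructor
  intro f hf
  have hcomp : ∀ j : Fin k, ∃ L, ∀ n, f n j ≡ L [SMOD (I ^ n • ⊤ : Submodule R R)] := by
    intro j
    apply IsPrecomplete.prec ‹IsPrecomplete I R›
    intro m n hmn
    have hmn' := hf hmn
    rw [SModEq.sub_mem] at hmn' ⊢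
    rw [mem_smul_top_self]
    exact (mem_smul_top_pi _ _).mp hmn' j
  choose L hL using hcomp
  refine ⟨L, fun n => ?_⟩
  rw [SModEq.sub_mem, mem_smul_top_pi]
  intro j
  have := hL j n
  rw [SModEq.sub_mem, mem_smul_top_self] at this
  simpa using this

private lemma isPrecomplete_of_surjective {R : Type u} [CommRing R] (I : Ideal R)
    {M : Type v} {P : Type w} [AddCommGroup M] [Module R M] [AddCommGroup P] [Module R P]
    (f : M →ₗ[R] P) (hf : Function.Surjective f) [IsPrecomplete I M] : IsPrecomplete I P := by
  constructor
  intro x hx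
  have hstep : ∀ n : ℕ, ∃ e : M, e ∈ (I ^ n • ⊤ : Submodule R M) ∧ f e = x (n + 1) - x n := by
    intro n
    have hmem : x (n + 1) - x n ∈ (I ^ n • ⊤ : Submodule R P) := by
      have h1 := hx (Nat.le_succ n)
      rw [SModEq.sub_mem] at h1
      simpa using Submodule.neg_mem _ h1
    have hsur : (I ^ n • ⊤ : Submodule R P) = Submodule.map f (I ^ n • ⊤) := by
      rw [Submodule.map_smul'', Submodule.map_top, LinearMap.range_eq_top.mpr hf]
    rw [hsur] at hmem
    obtain ⟨e, he, hfe⟩ := hmem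
    exact ⟨e, he, hfe⟩
  choose e he hfe using hstep
  obtain ⟨y0, hy0⟩ := hf (x 0)
  set y : ℕ → M := fun n => y0 + ∑ i ∈ Finset.range n, e i with hy
  have hfy : ∀ n, f (y n) = x n := by
    intro n
    simp only [hy, map_add, map_sum, hy0, hfe]
    rw [Finset.sum_range_sub (fun i => x i)]
    abel
  have hycauchy : ∀ {m n : ℕ}, m ≤ n → y m ≡ y n [SMOD (I ^ m • ⊤ : Submodule R M)] := by
    intro m n hmn
    rw [SModEq.sub_mem]
    have hsub : y m - y n = -∑ i ∈ Finset.Ico m n, e i := by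
      simp only [hy]
      rw [Finset.sum_Ico_eq_sub _ hmn]
      abel
    rw [hsub]
    refine Submodule.neg_mem _ (Submodule.sum_mem _ fun i hi => ?_)
    exact Submodule.smul_mono (Ideal.pow_le_pow_right (Finset.mem_Ico.mp hi).1) le_rfl (he i)
  obtain ⟨L, hL⟩ := IsPrecomplete.prec ‹IsPrecomplete I M› @hycauchy
  refine ⟨f L, fun n => ?_⟩
  rw [SModEq.sub_mem]
  have h1 := hL n
  rw [SModEq.sub_mem] at h1
  have h2 : f (y n) - f L ∈ Submodule.map f (I ^ n • ⊤) := ⟨y n - L, h1, by simp⟩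
  rw [Submodule.map_smul'', Submodule.map_top, LinearMap.range_eq_top.mpr hf] at h2
  rw [hfy n] at h2
  exact h2

end Precomplete

/-!
STATEMENT 3: Let `N` be a finitely generated module over a complete DVR `W` and `{N_n}` a
decreasing family of submodules of `N` such that each `N/N_n` has finite length and
`⋂_n N_n = 0`.  Then the topology on `N` defined by the family `{N_n}` coincides with the
maximal-ideal-adic topology (expressed as mutual cofinality of the two filtrations);
in particular `N` is complete for the topology defined by `{N_n}`.
-/
theorem stmt_3
    (W : Type*) [CommRing W] [IsDomain W] [IsDiscreteValuationRing W]
    [IsAdicComplete (IsLocalRing.maximalIdeal W) W]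
    (N : Type*) [AddCommGroup N] [Module W N] [Module.Finite W N]
    (Nn : ℕ → Submodule W N) (hdec : Antitone Nn)
    (hlen : ∀ n, IsFiniteLength W (N ⧸ Nn n))
    (hint : ⨅ n, Nn n = ⊥) :
    -- the two filtrations are mutually cofinal, i.e. define the same topology
    ((∀ n, ∃ m, Nn m ≤ (IsLocalRing.maximalIdeal W ^ n) • (⊤ : Submodule W N)) ∧
      (∀ n, ∃ m, (IsLocalRing.maximalIdeal W ^ m) • (⊤ : Submodule W N) ≤ Nn n)) ∧
    -- in particular `N` is complete for the topology defined by `{N_n}`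
    (∀ x : ℕ → N, (∀ i, x (i + 1) - x i ∈ Nn i) → ∃ L, ∀ i, L - x i ∈ Nn i) := by
  set I := IsLocalRing.maximalIdeal W with hI
  haveI : IsPrecomplete I N := by
    obtain ⟨k, f, hf⟩ := Module.Finite.exists_fin' W N
    haveI := isPrecomplete_pi I k
    exact isPrecomplete_of_surjective I f hf
  -- telescoping identity
  have tele : ∀ (f : ℕ → N) (m n : ℕ), m ≤ n →
      f m - f n = ∑ i ∈ Finset.Ico m n, (f i - f (i + 1)) := by
    intro f m n hmn
    induction n, hmn using Nat.le_induction with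
    | base => simp
    | succ n hmn ih => rw [Finset.sum_Ico_succ_top hmn, ← ih]; abel
  -- Part A : adic filtration is cofinal in Nn
  have partA : ∀ n, ∃ m, (I ^ m) • (⊤ : Submodule W N) ≤ Nn n := by
    intro n
    obtain ⟨k, hk⟩ := aux_len W (N ⧸ Nn n) (hlen n)
    refine ⟨k, fun x hx => ?_⟩
    have hmem : Submodule.Quotient.mk x ∈ Submodule.map (Nn n).mkQ ((I ^ k) • ⊤) :=
      ⟨x, hx, rfl⟩
    rw [Submodule.map_smul'', Submodule.map_top, Submodule.range_mkQ, hk] at hmem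
    rw [Submodule.mem_bot] at hmem
    rwa [Submodule.Quotient.mk_eq_zero] at hmem
  -- Part B : Nn is cofinal in the adic filtration (Chevalley's argument)
  have partB : ∀ n, ∃ m, Nn m ≤ (I ^ n) • (⊤ : Submodule W N) := by
    by_contra hc
    push_neg at hc
    obtain ⟨n0, hn0⟩ := hc
    set D : ℕ → ℕ → Submodule W N := fun n m => Nn m ⊔ (I ^ n) • ⊤ with hD
    set Q : ℕ → Submodule W N := fun n => ⨅ m, D n m with hQ
    have hDanti : ∀ n, Antitone (D n) := fun n a b hab => sup_le_sup_right (hdec hab) _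
    have hDn : ∀ m, Antitone (fun n => D n m) := fun m a b hab =>
      sup_le_sup_left (Submodule.smul_mono (Ideal.pow_le_pow_right hab) le_rfl) _
    have hQanti : Antitone Q := fun a b hab => le_iInf fun m => (iInf_le _ m).trans (hDn m hab)
    have hbotle : ∀ n, (I ^ n) • (⊤ : Submodule W N) ≤ Q n :=
      fun n => le_iInf fun m => le_sup_right
    -- stabilization of the chain m ↦ D n m
    have hstab : ∀ n, ∃ m0, Q n = D n m0 := by
      intro n
      haveI : IsArtinian W (N ⧸ ((I ^ n) • ⊤ : Submodule W N)) := by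
        apply aux_artinian W n
        have hmap : Submodule.map ((I ^ n • ⊤ : Submodule W N)).mkQ ((I ^ n) • ⊤ : Submodule W N)
            = (I ^ n) • (⊤ : Submodule W (N ⧸ ((I ^ n) • ⊤ : Submodule W N))) := by
          rw [Submodule.map_smul'', Submodule.map_top, Submodule.range_mkQ]
        rw [← hmap, eq_bot_iff]
        rintro y ⟨z, hz, rfl⟩
        simpa [Submodule.mem_bot, Submodule.Quotient.mk_eq_zero] using hz
      obtain ⟨m0, hm0⟩ := IsArtinian.monotone_stabilizes
        (R := W) (M := N ⧸ ((I ^ n) • ⊤ : Submodule W N))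
        ⟨fun m => OrderDual.toDual
            (Submodule.map ((I ^ n • ⊤ : Submodule W N)).mkQ (D n m)),
         fun a b hab => Submodule.map_mono (hDanti n hab)⟩
      have hcm : ∀ m, D n m
          = Submodule.comap ((I ^ n • ⊤ : Submodule W N)).mkQ
              (Submodule.map ((I ^ n • ⊤ : Submodule W N)).mkQ (D n m)) := by
        intro m
        rw [Submodule.comap_map_mkQ, sup_eq_right.mpr le_sup_right]
      have key : ∀ m, m0 ≤ m → D n m0 = D n m := by
        intro m hm
        have h2 : Submodule.map ((I ^ n • ⊤ : Submodule W N)).mkQ (D n m0)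
            = Submodule.map ((I ^ n • ⊤ : Submodule W N)).mkQ (D n m) := hm0 m hm
        rw [hcm m0, hcm m, h2]
      refine ⟨m0, le_antisymm (iInf_le _ m0) (le_iInf fun m => ?_)⟩
      rcases le_total m0 m with hle | hle
      · exact (key m hle).le
      · exact hDanti n hle
    -- Q n = Q (n+1) ⊔ I^n • ⊤
    have hQsucc : ∀ n, Q n = Q (n + 1) ⊔ (I ^ n) • ⊤ := by
      intro n
      obtain ⟨a, ha⟩ := hstab n
      obtain ⟨b, hb⟩ := hstab (n + 1)
      have hac : Q n = D n (max a b) :=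
        le_antisymm (iInf_le _ _) (ha ▸ hDanti n (le_max_left a b))
      have hbc : Q (n + 1) = D (n + 1) (max a b) :=
        le_antisymm (iInf_le _ _) (hb ▸ hDanti (n + 1) (le_max_right a b))
      rw [hac, hbc]
      show Nn (max a b) ⊔ (I ^ n) • ⊤ = (Nn (max a b) ⊔ (I ^ (n + 1)) • ⊤) ⊔ (I ^ n) • ⊤
      rw [sup_assoc]
      congr 1
      exact (sup_eq_right.mpr
        (Submodule.smul_mono (Ideal.pow_le_pow_right (Nat.le_succ n)) le_rfl)).symm
    -- an element of Q n0 not in I^n0 • ⊤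
    have hQn0 : ¬ Q n0 ≤ (I ^ n0) • (⊤ : Submodule W N) := by
      obtain ⟨a0, ha0⟩ := hstab n0
      rw [ha0]
      intro hle
      exact hn0 a0 (le_trans le_sup_left hle)
    obtain ⟨x0, hx0Q, hx0⟩ := SetLike.not_le_iff_exists.mp hQn0
    -- recursively build the Cauchy sequence
    have hstep : ∀ (k : ℕ) (y : N), y ∈ Q (n0 + k) →
        ∃ z, z ∈ Q (n0 + k + 1) ∧ y - z ∈ (I ^ (n0 + k)) • (⊤ : Submodule W N) := by
      intro k y hy
      rw [hQsucc (n0 + k)] at hy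
      obtain ⟨z, hz, b, hbmem, rfl⟩ := Submodule.mem_sup.mp hy
      exact ⟨z, hz, by simpa using hbmem⟩
    choose z hz1 hz2 using hstep
    set g : ∀ k : ℕ, {y : N // y ∈ Q (n0 + k)} := fun k =>
      Nat.rec ⟨x0, hx0Q⟩ (fun k p => ⟨z k p.1 p.2, hz1 k p.1 p.2⟩) k with hg
    have hgdiff : ∀ k, (g k).1 - (g (k + 1)).1 ∈ (I ^ (n0 + k)) • (⊤ : Submodule W N) :=
      fun k => hz2 k (g k).1 (g k).2
    have hgc : ∀ {m n : ℕ}, m ≤ n →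
        (g m).1 ≡ (g n).1 [SMOD ((I ^ m) • ⊤ : Submodule W N)] := by
      intro m n hmn
      rw [SModEq.sub_mem]
      rw [tele (fun k => (g k).1) m n hmn]
      refine Submodule.sum_mem _ fun i hi => ?_
      refine Submodule.smul_mono (Ideal.pow_le_pow_right ?_) le_rfl (hgdiff i)
      have := (Finset.mem_Ico.mp hi).1
      omega
    obtain ⟨L, hL⟩ := IsPrecomplete.prec ‹IsPrecomplete I N› @hgc
    have hLg : ∀ n, (g n).1 - L ∈ (I ^ n) • (⊤ : Submodule W N) :=
      fun n => SModEq.sub_mem.mp (hL n)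
    have hLQ : ∀ k, L ∈ Q k := by
      intro k
      have h1 : (g k).1 ∈ Q k := hQanti (Nat.le_add_left k n0) (g k).2
      have h2 : (g k).1 - L ∈ Q k := hbotle k (hLg k)
      simpa using (Q k).sub_mem h1 h2
    have hLN : ∀ m, L ∈ Nn m := by
      intro m
      obtain ⟨ℓ, hℓ⟩ := partA m
      have h1 : L ∈ D ℓ m := iInf_le (fun m' => D ℓ m') m (hLQ ℓ)
      exact (sup_le le_rfl hℓ) h1
    have hL0 : L = 0 := by
      have : L ∈ (⊥ : Submodule W N) := hint ▸ (Submodule.mem_iInf _).mpr hLN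
      simpa using this
    have hgnot : ∀ k, (g k).1 ∉ (I ^ n0) • (⊤ : Submodule W N) := by
      intro k
      induction k with
      | zero => exact hx0
      | succ k ih =>
        intro hmem
        apply ih
        have hdk : (g k).1 - (g (k + 1)).1 ∈ (I ^ n0) • (⊤ : Submodule W N) :=
          Submodule.smul_mono (Ideal.pow_le_pow_right (Nat.le_add_right n0 k)) le_rfl (hgdiff k)
        simpa using Submodule.add_mem _ hdk hmem
    apply hgnot n0
    have := hLg n0
    rw [hL0, sub_zero] at this
    exact this
  refine ⟨⟨partB, partA⟩, ?_⟩
  -- Part C : completeness for the Nn filtration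
  intro x hx
  have hdiff : ∀ i j, i ≤ j → x j - x i ∈ Nn i := by
    intro i j hij
    have h1 : x i - x j ∈ Nn i := by
      rw [tele x i j hij]
      refine Submodule.sum_mem _ fun t ht => ?_
      have hle : Nn t ≤ Nn i := hdec (Finset.mem_Ico.mp ht).1
      exact hle (by simpa using Submodule.neg_mem _ (hx t))
    simpa using Submodule.neg_mem _ h1
  choose M1 hM1 using partB
  set φ : ℕ → ℕ := fun m => max m ((Finset.range (m + 1)).sup M1) with hφ
  have hφm : Monotone φ := fun a b hab =>
    max_le_max hab (Finset.sup_mono (Finset.range_subset_range.mpr (by omega)))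
  have hφself : ∀ m, m ≤ φ m := fun m => le_max_left _ _
  have hφN : ∀ m, Nn (φ m) ≤ (I ^ m) • (⊤ : Submodule W N) := fun m =>
    le_trans (hdec (le_trans (Finset.le_sup (Finset.self_mem_range_succ m))
      (le_max_right _ _))) (hM1 m)
  have hfc : ∀ {m n : ℕ}, m ≤ n → x (φ m) ≡ x (φ n) [SMOD ((I ^ m) • ⊤ : Submodule W N)] := by
    intro m n hmn
    rw [SModEq.sub_mem]
    have h1 : x (φ n) - x (φ m) ∈ Nn (φ m) := hdiff (φ m) (φ n) (hφm hmn)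
    simpa using Submodule.neg_mem _ (hφN m h1)
  obtain ⟨L, hL⟩ := IsPrecomplete.prec ‹IsPrecomplete I N› @hfc
  refine ⟨L, fun i => ?_⟩
  obtain ⟨ℓ, hℓ⟩ := partA i
  set n := max i ℓ with hn
  have h1 : x (φ n) - x i ∈ Nn i :=
    hdiff i (φ n) (le_trans (le_max_left i ℓ) (hφself n))
  have h2 : L - x (φ n) ∈ Nn i := by
    have h3 := SModEq.sub_mem.mp (hL n)
    have h4 : x (φ n) - L ∈ (I ^ ℓ) • (⊤ : Submodule W N) :=
      Submodule.smul_mono (Ideal.pow_le_pow_right (le_max_right i ℓ)) le_rfl h3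
    simpa using Submodule.neg_mem _ (hℓ h4)
  simpa using Submodule.add_mem _ h2 h1
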